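/- Let v₁, v₂, v₃ ∈ ℝ³ be linearly independent vectors (three non-collinear projective points) and let l ∈ ℝ³ be a vector with ⟪vᵢ, l⟫ ≠ 0 for i = 1, 2, 3 (a projective line not passing through any of the three points). If A ∈ GL(3, ℝ) satisfies A vᵢ = cᵢ • vᵢ for some scalars cᵢ (i = 1, 2, 3) and Aᵀ l = d • l for some scalar d, then A is a scalar multiple of the identity matrix. (So three non-collinear points together with a line avoiding them form a complete projective pinning system.) -/

import Mathlib

open Matrix

/-- an invertible matrix fixing (projectively) three non-collinear
points and fixing (setwise) a line not passing through any of them is a scalar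
multiple of the identity: three non-collinear points and an avoiding line form
a complete projective pinning system. -/
theorem fix_three_points_and_line_scalar_identity
    (v : Fin 3 → Fin 3 → ℝ) (hv : LinearIndependent ℝ v)
    (l : Fin 3 → ℝ) (hl : ∀ i, v i ⬝ᵥ l ≠ 0)
    (A : Matrix (Fin 3) (Fin 3) ℝ) (hA : IsUnit A.det)
    (c : Fin 3 → ℝ) (hAv : ∀ i, A.mulVec (v i) = c i • v i)
    (d : ℝ) (hAl : Aᵀ.mulVec l = d • l) :
    ∃ k : ℝ, A = k • (1 : Matrix (Fin 3) (Fin 3) ℝ) := by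
  have hcd : ∀ i, c i = d := by
    intro i
    have h1 : A.mulVec (v i) ⬝ᵥ l = c i * (v i ⬝ᵥ l) := by
      rw [hAv i, smul_dotProduct, smul_eq_mul]
    have h2 : A.mulVec (v i) ⬝ᵥ l = d * (v i ⬝ᵥ l) := by
      rw [dotProduct_comm, dotProduct_mulVec, ← mulVec_transpose, hAl,
        smul_dotProduct, smul_eq_mul, dotProduct_comm]
    have := h1.symm.trans h2
    exact mul_right_cancel₀ (hl i) this
  refine ⟨d, ?_⟩
  have hb : ∀ i, A.mulVec (v i) = d • v i := by
    intro i; rw [hAv i, hcd i]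
  -- basis
  let B : Module.Basis (Fin 3) ℝ (Fin 3 → ℝ) :=
    basisOfLinearIndependentOfCardEqFinrank hv (by simp)
  have hBcoe : ∀ i, B i = v i := fun i =>
    congrFun (coe_basisOfLinearIndependentOfCardEqFinrank hv (by simp)) i
  apply Matrix.toLin'.injective
  apply B.ext
  intro i
  simp [Matrix.toLin'_apply, hBcoe, hb i, Matrix.smul_mulVec, Matrix.one_mulVec]
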